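/- Suppose γ_rm > γ_re > 0 and σ² > 0. Then the function g(P) = (1/2)·log₂((σ² + P·γ_rm)/(σ² + P·γ_re)) is strictly concave on [0, ∞). (Remark 1: at the KKT point, the per-subcarrier secure rate is concave increasing in the relay power.) -/

import Mathlib

/-- Remark 1: the per-subcarrier secure rate at the equal-rate KKT point,
`g(P) = (1/2)·log₂((σ² + P·γ_rm)/(σ² + P·γ_re))`, is strictly concave
on `[0, ∞)` when `γ_rm > γ_re > 0` and `σ² > 0`. -/
theorem secure_rate_strictConcaveOn (γrm γre σ2 : ℝ)
    (hre : 0 < γre) (hgain : γre < γrm) (hσ2 : 0 < σ2) :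
    StrictConcaveOn ℝ (Set.Ici (0 : ℝ))
      (fun P : ℝ => (1 / 2) * Real.logb 2 ((σ2 + P * γrm) / (σ2 + P * γre))) := by
  have hrm : 0 < γrm := hre.trans hgain
  set f : ℝ → ℝ := fun P : ℝ => (1 / 2) * Real.logb 2 ((σ2 + P * γrm) / (σ2 + P * γre)) with hf
  have hu : ∀ x : ℝ, 0 ≤ x → 0 < σ2 + x * γrm := fun x hx =>
    add_pos_of_pos_of_nonneg hσ2 (mul_nonneg hx hrm.le)
  have hv : ∀ x : ℝ, 0 ≤ x → 0 < σ2 + x * γre := fun x hx =>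
    add_pos_of_pos_of_nonneg hσ2 (mul_nonneg hx hre.le)
  have hlog2 : (0:ℝ) < Real.log 2 := Real.log_pos one_lt_two
  -- continuity
  have hcont : ContinuousOn f (Set.Ici 0) := by
    intro x hx
    apply ContinuousAt.continuousWithinAt
    apply ContinuousAt.mul continuousAt_const
    have hq : ContinuousAt (fun P : ℝ => (σ2 + P * γrm) / (σ2 + P * γre)) x :=
      ContinuousAt.div (by fun_prop) (by fun_prop) (ne_of_gt (hv x hx))
    exact ContinuousAt.comp (g := Real.logb 2)
      (Real.continuousAt_logb (ne_of_gt (div_pos (hu x hx) (hv x hx)))) hq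
  -- derivative on the interior
  have hderiv : ∀ x : ℝ, 0 < x → HasDerivAt f
      ((1 / (2 * Real.log 2)) * (γrm / (σ2 + x * γrm) - γre / (σ2 + x * γre))) x := by
    intro x hx
    have hux := hu x hx.le
    have hvx := hv x hx.le
    have h1 : HasDerivAt (fun P : ℝ => σ2 + P * γrm) γrm x := by
      simpa using ((hasDerivAt_id x).mul_const γrm).const_add σ2
    have h2 : HasDerivAt (fun P : ℝ => σ2 + P * γre) γre x := by
      simpa using ((hasDerivAt_id x).mul_const γre).const_add σ2
    have hq : HasDerivAt (fun P : ℝ => (σ2 + P * γrm) / (σ2 + P * γre))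
        ((γrm * (σ2 + x * γre) - (σ2 + x * γrm) * γre) / (σ2 + x * γre) ^ 2) x :=
      h1.div h2 hvx.ne'
    have hql : HasDerivAt (fun P : ℝ => Real.log ((σ2 + P * γrm) / (σ2 + P * γre)))
        (((σ2 + x * γrm) / (σ2 + x * γre))⁻¹ *
          ((γrm * (σ2 + x * γre) - (σ2 + x * γrm) * γre) / (σ2 + x * γre) ^ 2)) x := by
      simpa [Function.comp_def] using
        (Real.hasDerivAt_log (ne_of_gt (div_pos hux hvx))).comp x hq
    have hfg : f = fun P : ℝ =>
        (1 / (2 * Real.log 2)) * Real.log ((σ2 + P * γrm) / (σ2 + P * γre)) := by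
      funext P
      simp only [hf, Real.logb]
      ring
    rw [hfg]
    have := hql.const_mul (1 / (2 * Real.log 2))
    refine this.congr_deriv ?_
    field_simp
  have hderiv' : ∀ x ∈ Set.Ioi (0:ℝ), deriv f x =
      (1 / (2 * Real.log 2)) * (γrm / (σ2 + x * γrm) - γre / (σ2 + x * γre)) :=
    fun x hx => (hderiv x hx).deriv
  have hanti : StrictAntiOn (deriv f) (interior (Set.Ici (0:ℝ))) := by
    rw [interior_Ici]
    intro x hx y hy hxy
    rw [hderiv' x hx, hderiv' y hy]
    have hx0 : (0:ℝ) < x := hx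
    have hy0 : (0:ℝ) < y := hy
    have hux := hu x hx0.le; have hvx := hv x hx0.le
    have huy := hu y hy0.le; have hvy := hv y hy0.le
    have hc : (0:ℝ) < 1 / (2 * Real.log 2) := by positivity
    apply mul_lt_mul_of_pos_left _ hc
    -- pointwise comparison: γre/(σ2+tγre) < γrm/(σ2+tγrm) for t ≥ 0
    have hpt : ∀ t : ℝ, 0 ≤ t → γre / (σ2 + t * γre) < γrm / (σ2 + t * γrm) := by
      intro t ht
      rw [div_lt_div_iff₀ (hv t ht) (hu t ht)]
      nlinarith [mul_nonneg ht (sub_pos.2 hgain).le]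
    have key : γre / (σ2 + x * γre) - γre / (σ2 + y * γre)
        < γrm / (σ2 + x * γrm) - γrm / (σ2 + y * γrm) := by
      have e1 : γrm / (σ2 + x * γrm) - γrm / (σ2 + y * γrm)
          = (y - x) * ((γrm / (σ2 + x * γrm)) * (γrm / (σ2 + y * γrm))) := by
        field_simp; ring
      have e2 : γre / (σ2 + x * γre) - γre / (σ2 + y * γre)
          = (y - x) * ((γre / (σ2 + x * γre)) * (γre / (σ2 + y * γre))) := by
        field_simp; ring
      rw [e1, e2]
      apply mul_lt_mul_of_pos_left _ (sub_pos.2 hxy)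
      exact mul_lt_mul' (hpt x hx0.le).le (hpt y hy0.le)
        (div_pos hre hvy).le (div_pos hrm hux)
    linarith
  exact hanti.strictConcaveOn_of_deriv (convex_Ici 0) hcont
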